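/- arXiv:2501.17490 — 2 statements merged into one kernel-verified Lean document; each statement's English description precedes it below -/
import Mathlib

section
/- Define, for fixed real parameters κ > 0, Λ > 0, ρ ∈ [−1,1] and z ∈ ℝ (viewed in ℂ), c = κ − izρΛ, d = √(c² + z(i+z)Λ²), g = (c−d)/(c+d). Then the function B(τ) = ((c−d)/Λ²)·(1 − e^{−dτ})/(1 − g e^{−dτ}) satisfies the Riccati ODE B'(τ) = (Λ²/2)B(τ)² − c·B(τ) − z(i+z)/2 with initial condition B(0) = 0, for all τ ≥ 0 at which 1 − g e^{−dτ} ≠ 0. -/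
open Complex

/-- Heston Riccati verification: with `c = κ − izρΛ`, `d` a square root of
`c² + z(i+z)Λ²`, `g = (c−d)/(c+d)`, the function
`B(τ) = ((c−d)/Λ²)(1 − e^{−dτ})/(1 − g e^{−dτ})` satisfies `B(0) = 0` and
`B'(τ) = (Λ²/2)B(τ)² − cB(τ) − z(i+z)/2` at every `τ ≥ 0` where
`1 − g e^{−dτ} ≠ 0`. -/
theorem heston_riccati_B (κ Λ ρ z : ℝ) (hκ : 0 < κ) (hΛ : 0 < Λ)
    (hρ : ρ ∈ Set.Icc (-1 : ℝ) 1)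
    (c d g : ℂ) (hc : c = (κ : ℂ) - I * z * ρ * Λ)
    (hd : d ^ 2 = c ^ 2 + z * (I + z) * (Λ : ℂ) ^ 2)
    (hcd : c + d ≠ 0) (hg : g = (c - d) / (c + d))
    (B : ℝ → ℂ)
    (hB : B = fun τ : ℝ =>
      ((c - d) / (Λ : ℂ) ^ 2) * (1 - Complex.exp (-d * τ)) /
        (1 - g * Complex.exp (-d * τ))) :
    B 0 = 0 ∧
    ∀ τ : ℝ, 0 ≤ τ → 1 - g * Complex.exp (-d * τ) ≠ 0 →
      HasDerivAt B
        ((Λ : ℂ) ^ 2 / 2 * (B τ) ^ 2 - c * B τ - z * (I + z) / 2) τ := by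
  have hΛ' : (Λ : ℂ) ≠ 0 := by exact_mod_cast hΛ.ne'
  constructor
  · simp [hB]
  · intro τ hτ hden
    have hE : HasDerivAt (fun t : ℝ => Complex.exp (-d * t))
        (-d * Complex.exp (-d * τ)) τ := by
      have h0 : HasDerivAt (fun t : ℝ => -d * (t : ℂ)) (-d) τ := by
        simpa using (Complex.ofRealCLM.hasDerivAt (x := τ)).const_mul (-d)
      simpa [mul_comm] using h0.cexp
    have h1 : HasDerivAt (fun t : ℝ => ((c - d) / (Λ : ℂ) ^ 2) * (1 - Complex.exp (-d * t)))
        (((c - d) / (Λ : ℂ) ^ 2) * (d * Complex.exp (-d * τ))) τ := by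
      have := ((hasDerivAt_const τ (1 : ℂ)).sub hE).const_mul ((c - d) / (Λ : ℂ) ^ 2)
      simpa using this
    have h2 : HasDerivAt (fun t : ℝ => 1 - g * Complex.exp (-d * t))
        (-(g * (-d * Complex.exp (-d * τ)))) τ := by
      simpa using (hE.const_mul g).const_sub (1 : ℂ)
    have hD := h1.div h2 hden
    rw [hB]
    convert hD using 1
    · rfl
    · rfl
    simp only
    set E := Complex.exp (-d * τ) with hEdef
    have hg' : g * (c + d) = c - d := by rw [hg]; field_simp
    have hden2 : (Λ : ℂ) ^ 2 * (1 - g * E) ≠ 0 := mul_ne_zero (pow_ne_zero 2 hΛ') hden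
    have hD' : 1 - E * g ≠ 0 := by rwa [mul_comm E g]
    field_simp [hD']
    linear_combination (1 - E * g) ^ 2 * hd - (c - d) * ((1 - E) ^ 2 - (1 - E) * (1 - E * g) + E * (1 - g)) * hg'
end

section
/- With c, d, g, B(τ) as in the Heston Riccati solution (c = κ − izρΛ, d = √(c² + z(i+z)Λ²), g = (c−d)/(c+d), B(τ) = ((c−d)/Λ²)(1 − e^{−dτ})/(1 − g e^{−dτ})), the function A(τ) = (κω/Λ²)[(c−d)τ − 2 log((1 − g e^{−dτ})/(1 − g))] satisfies A'(τ) = κω·B(τ) with A(0) = 0, for τ in an interval where 1 − g e^{−dτ} stays in a simply connected domain avoiding 0 so that the complex logarithm is well defined and differentiable. -/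
open Complex

/-- Heston coefficient `A(τ) = (κω/Λ²)[(c−d)τ − 2 log((1 − g e^{−dτ})/(1 − g))]`
satisfies `A(0) = 0` and `A'(τ) = κω B(τ)` on an interval where the argument of
the logarithm stays in the slit plane (a simply connected domain avoiding `0`),
so that the (principal) complex logarithm is well defined and differentiable. -/
theorem heston_riccati_A (κ ω Λ ρ z : ℝ) (hκ : 0 < κ) (hω : 0 < ω) (hΛ : 0 < Λ)
    (hρ : ρ ∈ Set.Icc (-1 : ℝ) 1)
    (c d g : ℂ) (hc : c = (κ : ℂ) - I * z * ρ * Λ)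
    (hd : d ^ 2 = c ^ 2 + z * (I + z) * (Λ : ℂ) ^ 2)
    (hcd : c + d ≠ 0) (hg : g = (c - d) / (c + d)) (hg1 : g ≠ 1)
    (B A : ℝ → ℂ)
    (hB : B = fun τ : ℝ =>
      ((c - d) / (Λ : ℂ) ^ 2) * (1 - Complex.exp (-d * τ)) /
        (1 - g * Complex.exp (-d * τ)))
    (hA : A = fun τ : ℝ =>
      ((κ : ℂ) * ω / (Λ : ℂ) ^ 2) *
        ((c - d) * τ -
          2 * Complex.log ((1 - g * Complex.exp (-d * τ)) / (1 - g)))) :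
    A 0 = 0 ∧
    ∀ τ : ℝ,
      (∀ s ∈ Set.Icc 0 τ,
        (1 - g * Complex.exp (-d * s)) / (1 - g) ∈ Complex.slitPlane) →
      τ ∈ Set.Icc (0 : ℝ) τ →
      HasDerivAt A ((κ : ℂ) * ω * B τ) τ := by
  have hΛ0 : (Λ : ℂ) ≠ 0 := by exact_mod_cast hΛ.ne'
  have hg0 : (1 : ℂ) - g ≠ 0 := sub_ne_zero.mpr (fun h => hg1 h.symm)
  constructor
  · simp [hA, div_self hg0]
  · intro τ hS hτ
    have hmem := hS τ hτ
    have hne : (1 : ℂ) - g * Complex.exp (-d * τ) ≠ 0 := by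
      intro h
      rw [h, zero_div] at hmem
      exact slitPlane_ne_zero hmem rfl
    -- derivative of the inner function
    have hexp : HasDerivAt (fun t : ℝ => Complex.exp (-d * t))
        (-d * Complex.exp (-d * τ)) τ := by
      have : HasDerivAt (fun w : ℂ => Complex.exp (-d * w))
          (-d * Complex.exp (-d * τ)) (τ : ℂ) := by
        simpa [mul_comm] using ((hasDerivAt_id (τ : ℂ)).const_mul (-d)).cexp
      exact this.comp_ofReal
    have hf : HasDerivAt (fun t : ℝ => (1 - g * Complex.exp (-d * t)) / (1 - g))
        ((g * d * Complex.exp (-d * τ)) / (1 - g)) τ := by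
      have h1 : HasDerivAt (fun t : ℝ => (1 : ℂ) - g * Complex.exp (-d * t))
          (g * d * Complex.exp (-d * τ)) τ := by
        have := ((hexp.const_mul g).const_sub 1)
        exact this.congr_deriv (by ring)
      exact h1.div_const _
    have hlog := hf.clog_real hmem
    have hτfun : HasDerivAt (fun t : ℝ => (c - d) * (t : ℂ)) (c - d) τ := by
      simpa using (hasDerivAt_id (τ : ℂ)).const_mul (c - d) |>.comp_ofReal
    have hAder : HasDerivAt A
        (((κ : ℂ) * ω / (Λ : ℂ) ^ 2) *
          ((c - d) - 2 * (((g * d * Complex.exp (-d * τ)) / (1 - g)) /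
            ((1 - g * Complex.exp (-d * τ)) / (1 - g))))) τ := by
      rw [hA]
      exact ((hτfun.sub ((hlog.const_mul 2))).const_mul _)
    convert hAder using 1
    rw [hB]
    have hgd : g * (c + d) = c - d := by
      rw [hg, div_mul_cancel₀ _ hcd]
    have key : ∀ E : ℂ, 1 - g * E ≠ 0 →
        c - d - 2 * (g * d * E / (1 - g) / ((1 - g * E) / (1 - g))) =
        (c - d) * (1 - E) / (1 - g * E) := by
      intro E hE
      field_simp
      linear_combination (-E) * hgd
    rw [key _ hne]
    ring
end
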